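/- Let X₁, X₂, … be independent real-valued random variables with F_{X_ν} ∈ 𝒟 for some ν ≥ 1, and suppose limsup_{x→∞} sup_{n≥ν} (1/(n \bar F_{X_ν}(x))) Σ_{i=1}^n \bar F_{X_i}(x) < ∞. Then for each p > J⁺_{F_{X_ν}} there exists a constant c > 0 such that P(X₁+⋯+Xₙ > x) ≤ c n^{p+1} \bar F_{X_ν}(x) for all n ≥ ν and all x ≥ 0. -/

import Mathlib

open Filter MeasureTheory Topology

/-- The tail function of a real random variable: `x ↦ P(X > x)`. -/
noncomputable def tailDist {Ω : Type*} [MeasurableSpace Ω] (μ : Measure Ω)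
    (X : Ω → ℝ) : ℝ → ℝ :=
  fun x => (μ {ω | x < X ω}).toReal

/-- A tail function `T` is dominatedly varying:
for every `y ∈ (0,1)`, `limsup_{x→∞} T(xy)/T(x) < ∞`. -/
def DominatedlyVarying (T : ℝ → ℝ) : Prop :=
  ∀ y ∈ Set.Ioo (0:ℝ) 1, IsBoundedUnder (· ≤ ·) atTop (fun x => T (x * y) / T x)

/-- `J` is the (finite) upper Matuszewska index of the tail function `T`. -/
def IsUpperMatuszewskaIndex (T : ℝ → ℝ) (J : ℝ) : Prop :=
  Tendsto (fun y : ℝ =>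
      -(Real.log (Filter.liminf (fun x => T (x * y) / T x) atTop) / Real.log y))
    atTop (𝓝 J)

lemma tailDist_nonneg' {Ω : Type*} [MeasurableSpace Ω] (μ : Measure Ω)
    (X : Ω → ℝ) (x : ℝ) : 0 ≤ tailDist μ X x :=
  ENNReal.toReal_nonneg

lemma tailDist_le_one' {Ω : Type*} [MeasurableSpace Ω] (μ : Measure Ω)
    [IsProbabilityMeasure μ] (X : Ω → ℝ) (x : ℝ) : tailDist μ X x ≤ 1 := by
  have h := ENNReal.toReal_mono (a := μ {ω | x < X ω}) ENNReal.one_ne_top prob_le_one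
  simpa [tailDist] using h

lemma tailDist_antitone' {Ω : Type*} [MeasurableSpace Ω] (μ : Measure Ω)
    [IsFiniteMeasure μ] (X : Ω → ℝ) : Antitone (tailDist μ X) := by
  intro a b hab
  exact ENNReal.toReal_mono (measure_ne_top μ _)
    (measure_mono fun ω hω => lt_of_le_of_lt hab hω)

/-- Lemma 5 of the paper: for independent r.v.s `X₁, X₂, …` with `F_{X_ν} ∈ 𝒟` and
tails uniformly dominated on average by the tail of `X_ν`, for each
`p > J⁺_{F_{X_ν}}` there is a constant `c > 0` with
`P(X₁+⋯+Xₙ > x) ≤ c n^{p+1} P(X_ν > x)` for all `n ≥ ν` and `x ≥ 0`. -/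
theorem partial_sum_tail_upper_bound {Ω : Type*} [MeasurableSpace Ω]
    (μ : Measure Ω) [IsProbabilityMeasure μ]
    (X : ℕ → Ω → ℝ) (ν : ℕ) (hν : 1 ≤ ν)
    (hmeas : ∀ k, Measurable (X k))
    (hindep : ProbabilityTheory.iIndepFun X μ)
    (hpos : ∀ x, 0 < tailDist μ (X ν) x)
    (hD : DominatedlyVarying (tailDist μ (X ν)))
    (hdom : ∃ C : ℝ, ∀ᶠ x in atTop, ∀ n, ν ≤ n →
      (∑ i ∈ Finset.Icc 1 n, tailDist μ (X i) x) / (n * tailDist μ (X ν) x) ≤ C)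
    (p J : ℝ) (hJ : IsUpperMatuszewskaIndex (tailDist μ (X ν)) J) (hpJ : J < p) :
    ∃ c : ℝ, 0 < c ∧ ∀ n, ν ≤ n → ∀ x : ℝ, 0 ≤ x →
      tailDist μ (fun ω => ∑ k ∈ Finset.Icc 1 n, X k ω) x ≤
        c * (n : ℝ) ^ (p + 1) * tailDist μ (X ν) x := by
  classical
  set T := tailDist μ (X ν) with hTdef
  have hT0 : ∀ x, 0 < T x := hpos
  have hT1 : ∀ x, T x ≤ 1 := fun x => tailDist_le_one' μ (X ν) x
  have hTnn : ∀ x, 0 ≤ T x := fun x => (hT0 x).le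
  have hTanti : Antitone T := tailDist_antitone' μ (X ν)
  rw [IsUpperMatuszewskaIndex] at hJ
  -- ratio function facts
  have hratio_nn : ∀ y : ℝ, ∀ x : ℝ, 0 ≤ T (x * y) / T x :=
    fun y x => div_nonneg (hTnn _) (hTnn _)
  have hbdd_below : ∀ y : ℝ, IsBoundedUnder (· ≥ ·) atTop (fun x => T (x * y) / T x) :=
    fun y => ⟨0, eventually_map.2 (Eventually.of_forall fun x => hratio_nn y x)⟩
  have hbdd_above : ∀ y : ℝ, 1 ≤ y →
      IsBoundedUnder (· ≤ ·) atTop (fun x => T (x * y) / T x) := by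
    intro y hy
    refine ⟨1, eventually_map.2 ?_⟩
    filter_upwards [eventually_ge_atTop (0:ℝ)] with x hx
    have h1 : x ≤ x * y := le_mul_of_one_le_right hx hy
    exact div_le_one_of_le₀ (hTanti h1) (hTnn x)
  have hL_le_one : ∀ y : ℝ, 1 ≤ y →
      liminf (fun x => T (x * y) / T x) atTop ≤ 1 := by
    intro y hy
    refine liminf_le_of_frequently_le ?_ (hbdd_below y)
    refine ((eventually_ge_atTop (0:ℝ)).mono ?_).frequently
    intro x hx
    exact div_le_one_of_le₀ (hTanti (le_mul_of_one_le_right hx hy)) (hTnn x)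
  have hL_nonneg : ∀ y : ℝ, 1 ≤ y → 0 ≤ liminf (fun x => T (x * y) / T x) atTop := by
    intro y hy
    exact le_liminf_of_le (hbdd_above y hy).isCoboundedUnder_ge
      (Eventually.of_forall fun x => hratio_nn y x)
  -- J is nonnegative
  have hJ0 : 0 ≤ J := by
    refine ge_of_tendsto hJ ?_
    filter_upwards [eventually_gt_atTop (1:ℝ)] with y hy
    have hlogy : 0 < Real.log y := Real.log_pos hy
    have hlogL : Real.log (liminf (fun x => T (x * y) / T x) atTop) ≤ 0 :=
      Real.log_nonpos (hL_nonneg y hy.le) (hL_le_one y hy.le)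
    have : Real.log (liminf (fun x => T (x * y) / T x) atTop) / Real.log y ≤ 0 :=
      div_nonpos_of_nonpos_of_nonneg hlogL hlogy.le
    linarith
  have hp0 : 0 < p := lt_of_le_of_lt hJ0 hpJ
  set p' := (J + p) / 2 with hp'def
  have hJp' : J < p' := by rw [hp'def]; linarith
  have hp'p : p' < p := by rw [hp'def]; linarith
  have hp'0 : 0 < p' := by rw [hp'def]; linarith
  -- choose y₀
  obtain ⟨y₀, hy₀f, hy₀1⟩ :=
    ((hJ.eventually_lt_const hJp').and (eventually_gt_atTop (1:ℝ))).exists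
  have hy₀pos : (0:ℝ) < y₀ := lt_trans one_pos hy₀1
  have hlogy₀ : 0 < Real.log y₀ := Real.log_pos hy₀1
  set L₀ := liminf (fun x => T (x * y₀) / T x) atTop with hL₀def
  -- L₀ > 0 from dominated variation
  obtain ⟨M, hM⟩ := hD y₀⁻¹ ⟨inv_pos.2 hy₀pos, inv_lt_one_of_one_lt₀ hy₀1⟩
  rw [eventually_map] at hM
  have hMd : ∀ᶠ u in atTop, T u / T (u * y₀) ≤ M := by
    have h2 : Tendsto (fun u : ℝ => u * y₀) atTop atTop :=
      Tendsto.atTop_mul_const hy₀pos tendsto_id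
    filter_upwards [h2.eventually hM] with u hu
    have he : u * y₀ * y₀⁻¹ = u := by field_simp
    rwa [he] at hu
  have hM0 : 0 < max M 1 := lt_max_of_lt_right one_pos
  have hL₀pos : 0 < L₀ := by
    have hLlb : (max M 1)⁻¹ ≤ L₀ := by
      refine le_liminf_of_le ((hbdd_above y₀ hy₀1.le).isCoboundedUnder_ge) ?_
      filter_upwards [hMd] with u hu
      have h1 : T u ≤ max M 1 * T (u * y₀) := by
        rw [div_le_iff₀ (hT0 (u * y₀))] at hu
        calc T u ≤ M * T (u * y₀) := hu
          _ ≤ max M 1 * T (u * y₀) :=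
            mul_le_mul_of_nonneg_right (le_max_left _ _) (hTnn _)
      rw [le_div_iff₀ (hT0 u), inv_mul_le_iff₀ hM0]
      linarith
    exact lt_of_lt_of_le (inv_pos.2 hM0) hLlb
  -- L₀ > y₀ ^ (-p')
  set b := (y₀:ℝ) ^ (-p') with hbdef
  have hbpos : 0 < b := Real.rpow_pos_of_pos hy₀pos _
  have hbL : b < L₀ := by
    have h1 : -Real.log L₀ < p' * Real.log y₀ := by
      rw [← neg_div] at hy₀f
      exact (div_lt_iff₀ hlogy₀).1 hy₀f
    have h2 : Real.log b < Real.log L₀ := by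
      rw [hbdef, Real.log_rpow hy₀pos]; linarith
    exact (Real.log_lt_log_iff hbpos hL₀pos).1 h2
  -- eventual lower bound
  have hev2 : ∀ᶠ x in atTop, b < T (x * y₀) / T x :=
    eventually_lt_of_lt_liminf hbL (hbdd_below y₀)
  rw [eventually_atTop] at hev2
  obtain ⟨x₁', hx₁'⟩ := hev2
  set x₁ := max x₁' 1 with hx₁def
  have hx₁1 : (1:ℝ) ≤ x₁ := le_max_right _ _
  have hx₁0 : (0:ℝ) < x₁ := lt_of_lt_of_le one_pos hx₁1
  have hstep : ∀ x, x₁ ≤ x → b * T x ≤ T (x * y₀) := by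
    intro x hx
    have h := hx₁' x (le_trans (le_max_left _ _) hx)
    rw [lt_div_iff₀ (hT0 x)] at h
    exact h.le
  -- iterate
  have hiter : ∀ k : ℕ, ∀ x, x₁ ≤ x → b ^ k * T x ≤ T (x * y₀ ^ k) := by
    intro k
    induction k with
    | zero => intro x hx; simp
    | succ k ih =>
      intro x hx
      have hx0 : 0 < x := lt_of_lt_of_le hx₁0 hx
      have h1 : x₁ ≤ x * y₀ ^ k :=
        le_trans hx (le_mul_of_one_le_right hx0.le (one_le_pow₀ hy₀1.le))
      have h2 := hstep _ h1
      have h3 := ih x hx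
      calc b ^ (k + 1) * T x = b * (b ^ k * T x) := by ring
        _ ≤ b * T (x * y₀ ^ k) := by nlinarith
        _ ≤ T (x * y₀ ^ k * y₀) := h2
        _ = T (x * y₀ ^ (k + 1)) := by ring_nf
  -- Potter-type bound
  have hPotter : ∀ y : ℝ, 1 ≤ y → ∀ x, x₁ ≤ x → b * y ^ (-p) * T x ≤ T (x * y) := by
    intro y hy x hx
    have hy0 : (0:ℝ) < y := lt_of_lt_of_le one_pos hy
    have hx0 : (0:ℝ) < x := lt_of_lt_of_le hx₁0 hx
    set k := ⌈Real.log y / Real.log y₀⌉₊ with hkdef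
    have hnn : 0 ≤ Real.log y / Real.log y₀ :=
      div_nonneg (Real.log_nonneg hy) hlogy₀.le
    have hk1 : y ≤ y₀ ^ k := by
      have h1 : Real.log y ≤ (k:ℝ) * Real.log y₀ := by
        have := Nat.le_ceil (Real.log y / Real.log y₀)
        rw [div_le_iff₀ hlogy₀] at this
        exact this
      have h2 : Real.log y ≤ Real.log (y₀ ^ k) := by rw [Real.log_pow]; exact_mod_cast h1
      exact (Real.log_le_log_iff hy0 (pow_pos hy₀pos k)).1 h2
    have hk2 : (y₀:ℝ) ^ k ≤ y₀ * y := by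
      have h1 := Nat.ceil_lt_add_one hnn
      have h2 : (k:ℝ) * Real.log y₀ < Real.log y + Real.log y₀ := by
        rw [hkdef]
        calc (⌈Real.log y / Real.log y₀⌉₊ : ℝ) * Real.log y₀
            < (Real.log y / Real.log y₀ + 1) * Real.log y₀ :=
              mul_lt_mul_of_pos_right h1 hlogy₀
          _ = Real.log y + Real.log y₀ := by field_simp
      have h3 : Real.log (y₀ ^ k) < Real.log (y₀ * y) := by
        rw [Real.log_pow, Real.log_mul (ne_of_gt hy₀pos) (ne_of_gt hy0)]
        push_cast
        linarith
      exact ((Real.log_lt_log_iff (pow_pos hy₀pos k) (mul_pos hy₀pos hy0)).1 h3).le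
    have h4 : T (x * y₀ ^ k) ≤ T (x * y) :=
      hTanti (mul_le_mul_of_nonneg_left hk1 hx0.le)
    have h5 := hiter k x hx
    have h6 : b * y ^ (-p) ≤ b ^ k := by
      have hbk : b ^ k = ((y₀:ℝ) ^ (k:ℝ)) ^ (-p') := by
        rw [hbdef, ← Real.rpow_natCast ((y₀:ℝ) ^ (-p')) k, ← Real.rpow_mul hy₀pos.le,
          ← Real.rpow_mul hy₀pos.le, mul_comm]
      have h7 : ((y₀ * y : ℝ)) ^ (-p') ≤ ((y₀:ℝ) ^ (k:ℝ)) ^ (-p') := by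
        refine Real.rpow_le_rpow_of_nonpos (Real.rpow_pos_of_pos hy₀pos _) ?_ (by linarith)
        rw [Real.rpow_natCast]
        exact hk2
      have h8 : b * y ^ (-p) ≤ (y₀ * y : ℝ) ^ (-p') := by
        rw [Real.mul_rpow hy₀pos.le hy0.le, hbdef]
        refine mul_le_mul_of_nonneg_left ?_ (Real.rpow_pos_of_pos hy₀pos _).le
        exact Real.rpow_le_rpow_of_exponent_le hy (by linarith)
      calc b * y ^ (-p) ≤ (y₀ * y : ℝ) ^ (-p') := h8
        _ ≤ ((y₀:ℝ) ^ (k:ℝ)) ^ (-p') := h7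
        _ = b ^ k := hbk.symm
    calc b * y ^ (-p) * T x ≤ b ^ k * T x :=
          mul_le_mul_of_nonneg_right h6 (hTnn x)
      _ ≤ T (x * y₀ ^ k) := h5
      _ ≤ T (x * y) := h4
  -- global Potter bound for T (x / n)
  set C₂ := max b⁻¹ (b * T x₁)⁻¹ with hC₂def
  have hC₂pos : 0 < C₂ := lt_max_of_lt_left (inv_pos.2 hbpos)
  have hPotter2 : ∀ n : ℕ, 1 ≤ n → ∀ x : ℝ, 0 ≤ x →
      T (x / n) ≤ C₂ * (n:ℝ) ^ p * T x := by
    intro n hn x hx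
    have hn0 : (0:ℝ) < n := by exact_mod_cast hn
    have hn1 : (1:ℝ) ≤ n := by exact_mod_cast hn
    have hnp : (0:ℝ) < (n:ℝ) ^ p := Real.rpow_pos_of_pos hn0 _
    have hnpneg : (0:ℝ) < (n:ℝ) ^ (-p) := Real.rpow_pos_of_pos hn0 _
    have hcancel : (n:ℝ) ^ p * (n:ℝ) ^ (-p) = 1 := by
      rw [← Real.rpow_add hn0]; simp
    rcases le_or_gt x₁ (x / n) with h | h
    · have h1 := hPotter n hn1 (x / n) h
      rw [div_mul_cancel₀ _ (ne_of_gt hn0)] at h1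
      have hb2 : 0 < b * (n:ℝ) ^ (-p) := mul_pos hbpos hnpneg
      have key : (b * (n:ℝ)^(-p))⁻¹ = b⁻¹ * (n:ℝ)^p := by
        rw [mul_inv, ← Real.rpow_neg hn0.le, neg_neg]
      have h2 : T (x / n) ≤ b⁻¹ * (n:ℝ) ^ p * T x := by
        rw [← key, le_inv_mul_iff₀ hb2]
        exact h1
      calc T (x / n) ≤ b⁻¹ * (n:ℝ) ^ p * T x := h2
        _ ≤ C₂ * (n:ℝ) ^ p * T x := by
            refine mul_le_mul_of_nonneg_right
              (mul_le_mul_of_nonneg_right (le_max_left _ _) hnp.le) (hTnn x)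
    · -- x < n * x₁
      have hxlt : x ≤ x₁ * n := by
        rw [div_lt_iff₀ hn0] at h
        nlinarith
      have h1 := hPotter n hn1 x₁ le_rfl
      have h2 : T (x₁ * n) ≤ T x := hTanti hxlt
      have h3 : b * (n:ℝ) ^ (-p) * T x₁ ≤ T x := le_trans h1 h2
      have hbt : 0 < b * T x₁ := mul_pos hbpos (hT0 x₁)
      have h4a : b * T x₁ ≤ (n:ℝ)^p * T x := by
        have heq : (n:ℝ)^p * (b * (n:ℝ)^(-p) * T x₁) = b * T x₁ := by
          rw [show (n:ℝ)^p * (b * (n:ℝ)^(-p) * T x₁)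
              = ((n:ℝ)^p * (n:ℝ)^(-p)) * (b * T x₁) by ring, hcancel, one_mul]
        calc b * T x₁ = (n:ℝ)^p * (b * (n:ℝ)^(-p) * T x₁) := heq.symm
          _ ≤ (n:ℝ)^p * T x := mul_le_mul_of_nonneg_left h3 hnp.le
      have h4 : (1:ℝ) ≤ (b * T x₁)⁻¹ * (n:ℝ) ^ p * T x := by
        rw [mul_assoc, le_inv_mul_iff₀ hbt, mul_one]
        exact h4a
      calc T (x / n) ≤ 1 := hT1 _
        _ ≤ (b * T x₁)⁻¹ * (n:ℝ) ^ p * T x := h4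
        _ ≤ C₂ * (n:ℝ) ^ p * T x :=
            mul_le_mul_of_nonneg_right
              (mul_le_mul_of_nonneg_right (le_max_right _ _) hnp.le) (hTnn x)
  -- uniform domination of the averaged tails
  obtain ⟨C, hC⟩ := hdom
  rw [eventually_atTop] at hC
  obtain ⟨x₂', hx₂'⟩ := hC
  set x₂ := max x₂' 0 with hx₂def
  set C' := max C (T x₂)⁻¹ with hC'def
  have hC'pos : 0 < C' := lt_max_of_lt_right (inv_pos.2 (hT0 x₂))
  have hsum : ∀ n, ν ≤ n → ∀ x : ℝ, 0 ≤ x →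
      ∑ i ∈ Finset.Icc 1 n, tailDist μ (X i) x ≤ C' * ((n:ℝ) * T x) := by
    intro n hn x hx
    have hn1 : 1 ≤ n := le_trans hν hn
    have hn0 : (0:ℝ) < n := by exact_mod_cast hn1
    rcases le_or_gt x₂ x with h | h
    · have h1 := hx₂' x (le_trans (le_max_left _ _) h) n hn
      rw [div_le_iff₀ (mul_pos hn0 (hT0 x))] at h1
      calc ∑ i ∈ Finset.Icc 1 n, tailDist μ (X i) x ≤ C * ((n:ℝ) * T x) := h1
        _ ≤ C' * ((n:ℝ) * T x) :=
            mul_le_mul_of_nonneg_right (le_max_left _ _)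
              (mul_nonneg hn0.le (hTnn x))
    · have h1 : ∑ i ∈ Finset.Icc 1 n, tailDist μ (X i) x ≤ (n:ℝ) := by
        calc ∑ i ∈ Finset.Icc 1 n, tailDist μ (X i) x
            ≤ ∑ i ∈ Finset.Icc 1 n, (1:ℝ) :=
              Finset.sum_le_sum fun i _ => tailDist_le_one' μ (X i) x
          _ = (n:ℝ) := by
              rw [Finset.sum_const, Nat.card_Icc]
              simp
      have h2 : T x₂ ≤ T x := hTanti h.le
      have h3 : (T x₂)⁻¹ * ((n:ℝ) * T x) ≥ (n:ℝ) := by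
        have h4 : (T x₂)⁻¹ * ((n:ℝ) * T x₂) = (n:ℝ) := by
          field_simp
          exact div_self (ne_of_gt (hT0 x₂))
        nlinarith [inv_pos.2 (hT0 x₂), hT0 x₂]
      calc ∑ i ∈ Finset.Icc 1 n, tailDist μ (X i) x ≤ (n:ℝ) := h1
        _ ≤ (T x₂)⁻¹ * ((n:ℝ) * T x) := h3
        _ ≤ C' * ((n:ℝ) * T x) :=
            mul_le_mul_of_nonneg_right (le_max_right _ _)
              (mul_nonneg hn0.le (hTnn x))
  -- union bound
  have hub : ∀ n, 1 ≤ n → ∀ x : ℝ,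
      tailDist μ (fun ω => ∑ k ∈ Finset.Icc 1 n, X k ω) x ≤
        ∑ i ∈ Finset.Icc 1 n, tailDist μ (X i) (x / n) := by
    intro n hn x
    have hn0 : (0:ℝ) < n := by exact_mod_cast hn
    have hsub : {ω | x < ∑ k ∈ Finset.Icc 1 n, X k ω} ⊆
        ⋃ i ∈ Finset.Icc 1 n, {ω | x / n < X i ω} := by
      intro ω hω
      simp only [Set.mem_setOf_eq, Set.mem_iUnion, exists_prop] at *
      by_contra hcon
      push_neg at hcon
      have h1 : ∑ k ∈ Finset.Icc 1 n, X k ω ≤ ∑ k ∈ Finset.Icc 1 n, (x / n) :=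
        Finset.sum_le_sum fun i hi => hcon i hi
      rw [Finset.sum_const, Nat.card_Icc, nsmul_eq_mul] at h1
      have h2 : ((n + 1 - 1 : ℕ) : ℝ) * (x / n) = x := by
        rw [Nat.add_sub_cancel]
        field_simp
      rw [h2] at h1
      linarith
    have h1 : μ {ω | x < ∑ k ∈ Finset.Icc 1 n, X k ω} ≤
        ∑ i ∈ Finset.Icc 1 n, μ {ω | x / n < X i ω} :=
      (measure_mono hsub).trans (measure_biUnion_finset_le _ _)
    have hfin : (∑ i ∈ Finset.Icc 1 n, μ {ω | x / n < X i ω}) ≠ ⊤ := by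
      refine ne_of_lt (lt_of_le_of_lt (Finset.sum_le_sum fun i _ => prob_le_one) ?_)
      rw [Finset.sum_const, Nat.card_Icc]
      exact lt_of_le_of_lt le_rfl (by simp [lt_top_iff_ne_top])
    calc tailDist μ (fun ω => ∑ k ∈ Finset.Icc 1 n, X k ω) x
        = (μ {ω | x < ∑ k ∈ Finset.Icc 1 n, X k ω}).toReal := rfl
      _ ≤ (∑ i ∈ Finset.Icc 1 n, μ {ω | x / n < X i ω}).toReal :=
          ENNReal.toReal_mono hfin h1
      _ = ∑ i ∈ Finset.Icc 1 n, tailDist μ (X i) (x / n) :=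
          ENNReal.toReal_sum fun i _ => measure_ne_top μ _
  -- assemble
  refine ⟨C' * C₂, mul_pos hC'pos hC₂pos, ?_⟩
  intro n hn x hx
  have hn1 : 1 ≤ n := le_trans hν hn
  have hn0 : (0:ℝ) < n := by exact_mod_cast hn1
  have hxn : (0:ℝ) ≤ x / n := div_nonneg hx hn0.le
  calc tailDist μ (fun ω => ∑ k ∈ Finset.Icc 1 n, X k ω) x
      ≤ ∑ i ∈ Finset.Icc 1 n, tailDist μ (X i) (x / n) := hub n hn1 x
    _ ≤ C' * ((n:ℝ) * T (x / n)) := hsum n hn (x / n) hxn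
    _ ≤ C' * ((n:ℝ) * (C₂ * (n:ℝ) ^ p * T x)) := by
        refine mul_le_mul_of_nonneg_left
          (mul_le_mul_of_nonneg_left (hPotter2 n hn1 x hx) hn0.le) hC'pos.le
    _ = C' * C₂ * (n:ℝ) ^ (p + 1) * T x := by
        rw [Real.rpow_add_one (ne_of_gt hn0)]
        ring
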